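/- For a topological space X, a subset S ⊆ X is nowhere meager in X (i.e., S ∩ U is non-meager in X for every non-empty open U ⊆ X) if and only if S is dense in X and S is a Baire space in the subspace topology. -/

import Mathlib

open Set

/-- A nowhere dense set is meagre. -/
lemma aux_isNowhereDense_isMeagre {X : Type*} [TopologicalSpace X] {s : Set X}
    (hs : IsNowhereDense s) : IsMeagre s := by
  rw [isMeagre_iff_countable_union_isNowhereDense]
  exact ⟨{s}, by simpa using hs, countable_singleton s, by simp⟩

/-- If `S` is dense and `t` is a subset of `S` which is dense in the subspace `S`,
then `t` is dense in `X`. -/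
lemma aux_dense_of_subtype_dense {X : Type*} [TopologicalSpace X] {S : Set X}
    (hS : Dense S) {t : Set X} (ht : Dense ((Subtype.val ⁻¹' t : Set S))) :
    Dense (S ∩ t) := by
  have hsub : S ⊆ closure (S ∩ t) := by
    intro x hx
    have := ht ⟨x, hx⟩
    rw [closure_subtype] at this
    simpa only [Subtype.image_preimage_coe] using this
  have : Dense (closure (S ∩ t)) := hS.mono hsub
  rwa [dense_closure] at this

/-- `S` is nowhere meager in `X` (i.e. `S ∩ U` is non-meager in `X` for every
non-empty open `U`) iff `S` is dense in `X` and Baire as a subspace of `X`. -/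
theorem nowhereMeagre_iff_dense_and_baire {X : Type*} [TopologicalSpace X] (S : Set X) :
    (∀ U : Set X, IsOpen U → U.Nonempty → ¬ IsMeagre (S ∩ U)) ↔
      (Dense S ∧ BaireSpace S) := by
  constructor
  · intro h
    have hd : Dense S := by
      rw [dense_iff_inter_open]
      intro U hU hne
      by_contra hcon
      rw [not_nonempty_iff_eq_empty] at hcon
      exact h U hU hne (by rw [inter_comm, hcon]; exact IsMeagre.empty)
    refine ⟨hd, ⟨fun f ho hdense => ?_⟩⟩
    -- choose open sets `V n` in `X` with `f n = val ⁻¹' V n`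
    choose V hVo hVeq using fun n => isOpen_induced_iff.mp (ho n)
    -- each `V n ∩ S` is dense in `X`
    have hVdense : ∀ n, Dense (S ∩ V n) := by
      intro n
      exact aux_dense_of_subtype_dense hd (by rw [hVeq n]; exact hdense n)
    -- each `S \ V n` is nowhere dense in `X`
    have hnwd : ∀ n, IsNowhereDense (S \ V n) := by
      intro n
      rw [IsNowhereDense, eq_empty_iff_forall_notMem]
      intro x hx
      obtain ⟨y, hyO, hyS, hyV⟩ :=
        (hVdense n).inter_open_nonempty _ isOpen_interior ⟨x, hx⟩
      have hycl : y ∈ closure (S \ V n) := interior_subset hyO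
      rw [mem_closure_iff] at hycl
      obtain ⟨z, ⟨_, hzV⟩, _, hzV'⟩ :=
        hycl _ (isOpen_interior.inter (hVo n)) ⟨hyO, hyV⟩
      exact hzV' hzV
    rw [dense_iff_inter_open]
    rintro W' hW' ⟨p, hp⟩
    obtain ⟨W, hWo, hWeq⟩ := isOpen_induced_iff.mp hW'
    by_contra hcon
    rw [not_nonempty_iff_eq_empty] at hcon
    have hsub : S ∩ W ⊆ ⋃ n, (S \ V n) := by
      rintro x ⟨hxS, hxW⟩
      by_contra hx
      simp only [mem_iUnion, mem_diff, not_exists, not_and, not_not] at hx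
      have hmem : (⟨x, hxS⟩ : S) ∈ W' ∩ ⋂ n, f n := by
        refine ⟨by rw [← hWeq]; exact hxW, ?_⟩
        rw [mem_iInter]
        intro n
        rw [← hVeq n]
        exact hx n hxS
      rw [hcon] at hmem
      exact hmem
    have hpW : (p : X) ∈ W := by rw [← hWeq] at hp; exact hp
    exact h W hWo ⟨p, hpW⟩
      ((isMeagre_iUnion fun n => aux_isNowhereDense_isMeagre (hnwd n)).mono hsub)
  · rintro ⟨hd, hb⟩ U hU hne hm
    rw [IsMeagre, mem_residual_iff] at hm
    obtain ⟨𝒱, hVo, hVd, hVc, hVsub⟩ := hm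
    obtain ⟨f, hf⟩ := ((hVc.insert univ)).exists_eq_range (insert_nonempty _ _)
    have hfo : ∀ n, IsOpen (f n) := by
      intro n
      have : f n ∈ insert univ 𝒱 := by rw [hf]; exact mem_range_self n
      rcases this with h | h
      · rw [h]; exact isOpen_univ
      · exact hVo _ h
    have hfd : ∀ n, Dense (f n) := by
      intro n
      have : f n ∈ insert univ 𝒱 := by rw [hf]; exact mem_range_self n
      rcases this with h | h
      · rw [h]; exact dense_univ
      · exact hVd _ h
    -- preimages in the subspace are open and dense
    have hgo : ∀ n, IsOpen ((Subtype.val ⁻¹' f n : Set S)) := fun n =>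
      (hfo n).preimage continuous_subtype_val
    have hgd : ∀ n, Dense ((Subtype.val ⁻¹' f n : Set S)) := by
      intro n
      rw [dense_iff_inter_open]
      rintro W' hW' ⟨p, hp⟩
      obtain ⟨W, hWo, hWeq⟩ := isOpen_induced_iff.mp hW'
      have hpW : (p : X) ∈ W := by rw [← hWeq] at hp; exact hp
      obtain ⟨y, ⟨hy1, hy2⟩, hyS⟩ :=
        hd.inter_open_nonempty _ (hWo.inter (hfo n)) ((hfd n).inter_open_nonempty _ hWo ⟨p, hpW⟩)
      exact ⟨⟨y, hyS⟩, by rw [← hWeq] at *; exact hy1, hy2⟩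
    have hdi : Dense (⋂ n, (Subtype.val ⁻¹' f n : Set S)) :=
      hb.baire_property _ hgo hgd
    obtain ⟨x, hxU, hxS⟩ := hd.inter_open_nonempty U hU hne
    obtain ⟨y, hyU, hyI⟩ := hdi.inter_open_nonempty (Subtype.val ⁻¹' U)
      (hU.preimage continuous_subtype_val) ⟨⟨x, hxS⟩, hxU⟩
    have hyV : (y : X) ∈ ⋂₀ 𝒱 := by
      intro V hV
      have : V ∈ insert univ 𝒱 := mem_insert_of_mem _ hV
      rw [hf] at this
      obtain ⟨n, hn⟩ := this
      rw [← hn]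
      exact mem_iInter.mp hyI n
    exact hVsub hyV ⟨y.2, hyU⟩
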